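/- Fix a symmetric positive definite k×k matrix Σ with all diagonal entries at most 1. Then max_{s ∈ {-1,1}^k} s'Σ^{-1}s ≥ k, with equality if and only if Σ is the identity matrix I_k. -/

import Mathlib

open MeasureTheory Matrix

/-- Largest "eigenvalue" via the Rayleigh quotient (equals the largest eigenvalue
for symmetric matrices). -/
noncomputable def lamMax {k : ℕ} (A : Matrix (Fin k) (Fin k) ℝ) : ℝ :=
  ⨆ u : {u : Fin k → ℝ // u ⬝ᵥ u = 1}, u.1 ⬝ᵥ A *ᵥ u.1

/-- Smallest "eigenvalue" via the Rayleigh quotient. -/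
noncomputable def lamMin {k : ℕ} (A : Matrix (Fin k) (Fin k) ℝ) : ℝ :=
  ⨅ u : {u : Fin k → ℝ // u ⬝ᵥ u = 1}, u.1 ⬝ᵥ A *ᵥ u.1

/-- The scatter halfspace depth of a scatter matrix `Sg` w.r.t. the probability
measure `P`, with location `T`. -/
noncomputable def HD {k : ℕ} (P : Measure (Fin k → ℝ)) (T : Fin k → ℝ)
    (Sg : Matrix (Fin k) (Fin k) ℝ) : ℝ :=
  ⨅ u : {u : Fin k → ℝ // u ⬝ᵥ u = 1},
    min (P {x | |u.1 ⬝ᵥ (x - T)| ≤ Real.sqrt (u.1 ⬝ᵥ Sg *ᵥ u.1)}).toReal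
        (P {x | Real.sqrt (u.1 ⬝ᵥ Sg *ᵥ u.1) ≤ |u.1 ⬝ᵥ (x - T)|}).toReal

/-- Matrix square root via the continuous functional calculus. -/
noncomputable def msqrt {k : ℕ} (A : Matrix (Fin k) (Fin k) ℝ) : Matrix (Fin k) (Fin k) ℝ :=
  cfc Real.sqrt A

/-- Matrix logarithm via the continuous functional calculus. -/
noncomputable def mlog {k : ℕ} (A : Matrix (Fin k) (Fin k) ℝ) : Matrix (Fin k) (Fin k) ℝ :=
  cfc Real.log A

/-- Matrix real power via the continuous functional calculus. -/
noncomputable def mpow {k : ℕ} (A : Matrix (Fin k) (Fin k) ℝ) (t : ℝ) :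
    Matrix (Fin k) (Fin k) ℝ :=
  cfc (fun x : ℝ => x ^ t) A

/-- The geodesic path from `A` to `B` in the space of positive definite matrices. -/
noncomputable def geoPath {k : ℕ} (A B : Matrix (Fin k) (Fin k) ℝ) (t : ℝ) :
    Matrix (Fin k) (Fin k) ℝ :=
  msqrt A * mpow ((msqrt A)⁻¹ * B * (msqrt A)⁻¹) t * msqrt A

/-- The harmonic path from `A` to `B`. -/
noncomputable def harmPath {k : ℕ} (A B : Matrix (Fin k) (Fin k) ℝ) (t : ℝ) :
    Matrix (Fin k) (Fin k) ℝ :=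
  ((1 - t) • A⁻¹ + t • B⁻¹)⁻¹

/-- Frobenius norm of a matrix. -/
noncomputable def frob {k : ℕ} (A : Matrix (Fin k) (Fin k) ℝ) : ℝ :=
  Real.sqrt (∑ i, ∑ j, (A i j) ^ 2)

/-- Geodesic distance on the space of positive definite matrices. -/
noncomputable def dg {k : ℕ} (A B : Matrix (Fin k) (Fin k) ℝ) : ℝ :=
  frob (mlog ((msqrt A)⁻¹ * B * (msqrt A)⁻¹))

/-- Sign vectors in `{-1,1}^k`. -/
def SignVec (k : ℕ) := {s : Fin k → ℝ // ∀ i, s i = 1 ∨ s i = -1}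

section Aux

variable {k : ℕ}

/-- The sign ±1 associated with a Boolean. -/
def sgnb (b : Bool) : ℝ := if b then 1 else -1

lemma sgnb_mul_self (b : Bool) : sgnb b * sgnb b = 1 := by cases b <;> simp [sgnb]

lemma sgnb_not (b : Bool) : sgnb (!b) = - sgnb b := by cases b <;> simp [sgnb]

instance : Nonempty (SignVec k) := ⟨⟨fun _ => 1, fun _ => Or.inl rfl⟩⟩

instance : Finite (SignVec k) := by
  apply Finite.of_injective (fun s : SignVec k => (fun i => s.1 i = (1:ℝ) : Fin k → Prop))
  rintro ⟨s, hs⟩ ⟨t, ht⟩ h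
  have h' : ∀ i, (s i = (1:ℝ)) ↔ (t i = (1:ℝ)) := fun i => iff_of_eq (congrFun h i)
  apply Subtype.ext
  funext i
  show s i = t i
  rcases hs i with h1 | h1 <;> rcases ht i with h2 | h2 <;> rw [h1, h2]
  · exfalso; have := (h' i).mp h1; rw [h2] at this; norm_num at this
  · exfalso; have := (h' i).mpr h2; rw [h1] at this; norm_num at this

/-- The sign vector associated with a Boolean vector. -/
def sv (b : Fin k → Bool) : SignVec k :=
  ⟨fun i => sgnb (b i), fun i => by cases h : b i <;> simp [sgnb, h]⟩

lemma sum_sgnb (i j : Fin k) :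
    ∑ b : Fin k → Bool, sgnb (b i) * sgnb (b j) = if i = j then (2^k : ℝ) else 0 := by
  rcases eq_or_ne i j with rfl | hij
  · simp [sgnb_mul_self, Finset.card_univ, Fintype.card_fun]
  · rw [if_neg hij]
    have hinv : Function.Involutive (fun b : Fin k → Bool => Function.update b i (!(b i))) := by
      intro b
      simp only [Function.update_self]
      rw [Function.update_idem, Bool.not_not, Function.update_eq_self]
    let e := hinv.toPerm
    have h1 : ∑ b : Fin k → Bool, sgnb ((e b) i) * sgnb ((e b) j)
        = ∑ b : Fin k → Bool, sgnb (b i) * sgnb (b j) :=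
      Equiv.sum_comp e (fun b => sgnb (b i) * sgnb (b j))
    have h2 : ∀ b : Fin k → Bool, sgnb ((e b) i) * sgnb ((e b) j)
        = -(sgnb (b i) * sgnb (b j)) := by
      intro b
      have hei : (e b) i = !(b i) := Function.update_self _ _ _
      have hej : (e b) j = b j := Function.update_of_ne (Ne.symm hij) _ _
      rw [hei, hej, sgnb_not]; ring
    have h3 : ∑ b : Fin k → Bool, -(sgnb (b i) * sgnb (b j))
        = ∑ b : Fin k → Bool, sgnb (b i) * sgnb (b j) := by
      rw [← h1]
      exact Finset.sum_congr rfl fun b _ => (h2 b).symm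
    rw [Finset.sum_neg_distrib] at h3
    linarith

lemma sum_quad (A : Matrix (Fin k) (Fin k) ℝ) :
    ∑ b : Fin k → Bool, ((sv b).1 ⬝ᵥ A *ᵥ (sv b).1) = 2^k * ∑ i, A i i := by
  have h1 : ∀ b : Fin k → Bool, (sv b).1 ⬝ᵥ A *ᵥ (sv b).1
      = ∑ i, ∑ j, A i j * (sgnb (b i) * sgnb (b j)) := by
    intro b
    simp only [sv, dotProduct, mulVec, Finset.mul_sum]
    exact Finset.sum_congr rfl fun i _ => Finset.sum_congr rfl fun j _ => by ring
  calc ∑ b : Fin k → Bool, ((sv b).1 ⬝ᵥ A *ᵥ (sv b).1)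
      = ∑ b : Fin k → Bool, ∑ i, ∑ j, A i j * (sgnb (b i) * sgnb (b j)) :=
        Finset.sum_congr rfl fun b _ => h1 b
    _ = ∑ i, ∑ j, ∑ b : Fin k → Bool, A i j * (sgnb (b i) * sgnb (b j)) := by
        rw [Finset.sum_comm]
        exact Finset.sum_congr rfl fun i _ => Finset.sum_comm
    _ = ∑ i, ∑ j, A i j * (if i = j then (2^k:ℝ) else 0) := by
        refine Finset.sum_congr rfl fun i _ => Finset.sum_congr rfl fun j _ => ?_
        rw [← Finset.mul_sum, sum_sgnb]
    _ = ∑ i, A i i * 2^k := by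
        refine Finset.sum_congr rfl fun i _ => ?_
        simp [mul_ite]
    _ = 2^k * ∑ i, A i i := by rw [← Finset.sum_mul, mul_comm]

end Aux

lemma diag_key {k : ℕ} (Sg : Matrix (Fin k) (Fin k) ℝ) (hSg : Sg.PosDef) (i : Fin k) :
    0 < Sg⁻¹ i i ∧ 1 ≤ Sg i i * Sg⁻¹ i i ∧
      (Sg i i * Sg⁻¹ i i = 1 → Sg⁻¹ *ᵥ Pi.single i 1 = Sg⁻¹ i i • (Pi.single i 1 : Fin k → ℝ)) := by
  classical
  set A := Sg⁻¹ with hA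
  set e : Fin k → ℝ := Pi.single i 1 with hedef
  have hAinv : A.PosDef := hSg.inv
  have hdet : IsUnit Sg.det := isUnit_iff_ne_zero.mpr hSg.det_pos.ne'
  have hmul : Sg * A = 1 := Matrix.mul_nonsing_inv _ hdet
  have he0 : e ≠ 0 := by
    intro h
    have := congrFun h i
    simp [hedef] at this
  have hApos : 0 < A i i := by
    have := hAinv.dotProduct_mulVec_pos he0
    simpa [hedef] using this
  have hsymm : ∀ p q, Sg p q = Sg q p := by
    intro p q
    have := hSg.1.apply q p
    simpa using this
  have hSA : Sg *ᵥ (A *ᵥ e) = e := by rw [mulVec_mulVec, hmul, one_mulVec]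
  set v : Fin k → ℝ := A *ᵥ e - (A i i) • e with hv
  have hAe_e : (A *ᵥ e) ⬝ᵥ e = A i i := by simp [hedef]
  have he_e : e ⬝ᵥ e = (1:ℝ) := by simp [hedef]
  have he_Se : e ⬝ᵥ (Sg *ᵥ e) = Sg i i := by simp [hedef]
  have hAe_Se : (A *ᵥ e) ⬝ᵥ (Sg *ᵥ e) = 1 := by
    have h1 : (A *ᵥ e) ⬝ᵥ (Sg *ᵥ e) = ∑ l, A l i * Sg l i := by
      simp [hedef, dotProduct]
    rw [h1]
    have h2 : ∑ l, A l i * Sg l i = ∑ l, Sg i l * A l i :=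
      Finset.sum_congr rfl fun l _ => by rw [hsymm l i]; ring
    rw [h2, ← Matrix.mul_apply, hmul]
    simp
  have hq : v ⬝ᵥ (Sg *ᵥ v) = A i i * (A i i * Sg i i - 1) := by
    have hSv : Sg *ᵥ v = e - (A i i) • (Sg *ᵥ e) := by
      rw [hv, mulVec_sub, mulVec_smul, hSA]
    rw [hv, hSv]
    simp only [sub_dotProduct, dotProduct_sub, smul_dotProduct, dotProduct_smul, smul_eq_mul]
    rw [hAe_e, he_e, he_Se, hAe_Se]
    ring
  have hq0 : 0 ≤ v ⬝ᵥ (Sg *ᵥ v) := by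
    rcases eq_or_ne v 0 with h | h
    · simp [h]
    · have := hSg.dotProduct_mulVec_pos h
      simpa using this.le
  refine ⟨hApos, ?_, ?_⟩
  · rw [hq] at hq0
    nlinarith [hApos]
  · intro heq
    have hv0 : v = 0 := by
      by_contra h
      have hlt := hSg.dotProduct_mulVec_pos h
      rw [show star v = v from by simp] at hlt
      rw [hq] at hlt
      nlinarith
    have := sub_eq_zero.mp (hv ▸ hv0 : A *ᵥ e - (A i i) • e = 0)
    exact this


/-- if all diagonal entries of the positive definite matrix `Σ` are
at most `1`, then `max_{s ∈ {-1,1}^k} s'Σ⁻¹s ≥ k`, with equality iff `Σ = I_k`. -/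
theorem sign_sup_inv_quadform_ge {k : ℕ} [NeZero k] (Sg : Matrix (Fin k) (Fin k) ℝ)
    (hSg : Sg.PosDef) (hdiag : ∀ i, Sg i i ≤ 1) :
    (k : ℝ) ≤ (⨆ s : SignVec k, s.1 ⬝ᵥ Sg⁻¹ *ᵥ s.1) ∧
      ((⨆ s : SignVec k, s.1 ⬝ᵥ Sg⁻¹ *ᵥ s.1) = (k : ℝ) ↔ Sg = 1) := by
  classical
  have hkey := fun i => diag_key Sg hSg i
  have hApos1 : ∀ i, 1 ≤ Sg⁻¹ i i := by
    intro i
    have h1 := (hkey i).2.1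
    have h2 := (hkey i).1
    nlinarith [hdiag i]
  have htr : (k:ℝ) ≤ ∑ i, Sg⁻¹ i i := by
    calc (k:ℝ) = ∑ _i : Fin k, (1:ℝ) := by simp
    _ ≤ ∑ i, Sg⁻¹ i i := Finset.sum_le_sum fun i _ => hApos1 i
  have hbdd : BddAbove (Set.range fun s : SignVec k => s.1 ⬝ᵥ Sg⁻¹ *ᵥ s.1) :=
    (Set.finite_range _).bddAbove
  have hle : ∀ s : SignVec k, s.1 ⬝ᵥ Sg⁻¹ *ᵥ s.1 ≤ ⨆ s : SignVec k, s.1 ⬝ᵥ Sg⁻¹ *ᵥ s.1 :=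
    fun s => le_ciSup hbdd s
  have hsum := sum_quad (k := k) Sg⁻¹
  have hcard : (Finset.univ : Finset (Fin k → Bool)).card = 2^k := by
    simp [Fintype.card_fun]
  have hex : ∃ b : Fin k → Bool, ∑ i, Sg⁻¹ i i ≤ (sv b).1 ⬝ᵥ Sg⁻¹ *ᵥ (sv b).1 := by
    by_contra h
    push_neg at h
    have hlt : ∑ b : Fin k → Bool, ((sv b).1 ⬝ᵥ Sg⁻¹ *ᵥ (sv b).1)
        < ∑ _b : Fin k → Bool, ∑ i, Sg⁻¹ i i :=
      Finset.sum_lt_sum_of_nonempty Finset.univ_nonempty (fun b _ => h b)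
    rw [hsum, Finset.sum_const, hcard, nsmul_eq_mul] at hlt
    push_cast at hlt
    linarith
  obtain ⟨b, hb⟩ := hex
  have part1 : (k:ℝ) ≤ ⨆ s : SignVec k, s.1 ⬝ᵥ Sg⁻¹ *ᵥ s.1 :=
    le_trans (le_trans htr hb) (hle (sv b))
  refine ⟨part1, ?_, ?_⟩
  · intro hsup
    have hval : ∀ s : SignVec k, s.1 ⬝ᵥ Sg⁻¹ *ᵥ s.1 ≤ (k:ℝ) := fun s => hsup ▸ hle s
    have htr_le : ∑ i, Sg⁻¹ i i ≤ (k:ℝ) := by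
      have h2 : ∑ b : Fin k → Bool, ((sv b).1 ⬝ᵥ Sg⁻¹ *ᵥ (sv b).1)
          ≤ ∑ _b : Fin k → Bool, (k:ℝ) :=
        Finset.sum_le_sum fun b _ => hval (sv b)
      rw [hsum, Finset.sum_const, hcard, nsmul_eq_mul] at h2
      push_cast at h2
      have hpow : (0:ℝ) < 2^k := by positivity
      exact le_of_mul_le_mul_left h2 hpow
    have hAdiag : ∀ i, Sg⁻¹ i i = 1 := by
      intro i
      by_contra hne
      have h3 : 1 < Sg⁻¹ i i := lt_of_le_of_ne (hApos1 i) (Ne.symm hne)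
      have h4 : (k:ℝ) < ∑ i, Sg⁻¹ i i := by
        calc (k:ℝ) = ∑ _i : Fin k, (1:ℝ) := by simp
        _ < ∑ i, Sg⁻¹ i i :=
          Finset.sum_lt_sum (fun j _ => hApos1 j) ⟨i, Finset.mem_univ i, h3⟩
      linarith
    have heig : ∀ i, Sg⁻¹ *ᵥ Pi.single i 1 = (Pi.single i 1 : Fin k → ℝ) := by
      intro i
      have h5 : Sg i i * Sg⁻¹ i i = 1 := by
        have h6 := (hkey i).2.1
        have h7 := hdiag i
        rw [hAdiag i] at h6 ⊢
        nlinarith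
      have h8 := (hkey i).2.2 h5
      rw [hAdiag i] at h8
      simpa using h8
    have hA1 : Sg⁻¹ = 1 := by
      ext p q
      have h9 := congrFun (heig q) p
      simp only [mulVec_single, mul_one, MulOpposite.op_one, one_smul, Matrix.col_apply] at h9
      rw [h9]
      simp [Pi.single_apply, Matrix.one_apply, eq_comm]
    have hdet : IsUnit Sg.det := isUnit_iff_ne_zero.mpr hSg.det_pos.ne'
    calc Sg = Sg⁻¹⁻¹ := (Matrix.nonsing_inv_nonsing_inv Sg hdet).symm
    _ = (1 : Matrix (Fin k) (Fin k) ℝ)⁻¹ := by rw [hA1]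
    _ = 1 := inv_one
  · intro h1
    have hconst : ∀ s : SignVec k, s.1 ⬝ᵥ Sg⁻¹ *ᵥ s.1 = (k:ℝ) := by
      intro s
      rw [h1, inv_one, one_mulVec]
      have hsq : ∀ i, s.1 i * s.1 i = 1 := fun i => by
        rcases s.2 i with h | h <;> rw [h] <;> norm_num
      simp [dotProduct, hsq]
    calc (⨆ s : SignVec k, s.1 ⬝ᵥ Sg⁻¹ *ᵥ s.1) = ⨆ _s : SignVec k, (k:ℝ) :=
      iSup_congr hconst
    _ = (k:ℝ) := ciSup_const
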